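/- Let G be a locally triangle-free graph in W₂ and let ab be an edge of G. Then G_{ab} := G \ N_G[{a,b}] is either the empty graph or is well-covered with α(G_{ab}) = α(G) − 1. -/

import Mathlib

open Set

variable {V : Type*}

/-- `S` is an independent set of `G` contained in the vertex subset `W`
(i.e. an independent set of the induced subgraph `G[W]`). -/
def IsIndepOn (G : SimpleGraph V) (W S : Set V) : Prop :=
  S ⊆ W ∧ ∀ ⦃x⦄, x ∈ S → ∀ ⦃y⦄, y ∈ S → ¬ G.Adj x y

/-- `S` is a maximal independent set of the induced subgraph `G[W]`. -/
def MaxIndepOn (G : SimpleGraph V) (W : Set V) (S : Finset V) : Prop :=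
  IsIndepOn G W ↑S ∧ ∀ v ∈ W, v ∉ S → ¬ IsIndepOn G W (insert v ↑S)

/-- The independence number of the induced subgraph `G[W]`. -/
noncomputable def indepNumOn (G : SimpleGraph V) (W : Set V) : ℕ :=
  sSup {n | ∃ S : Finset V, IsIndepOn G W ↑S ∧ S.card = n}

/-- The induced subgraph `G[W]` is well-covered: every maximal independent set
has cardinality equal to the independence number. -/
def WellCoveredOn (G : SimpleGraph V) (W : Set V) : Prop :=
  ∀ S : Finset V, MaxIndepOn G W S → S.card = indepNumOn G W

/-- The independence number `α(G)`. -/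
noncomputable def indepNum (G : SimpleGraph V) : ℕ := indepNumOn G Set.univ

/-- `G` is well-covered. -/
def WellCovered (G : SimpleGraph V) : Prop := WellCoveredOn G Set.univ

/-- The induced subgraph `G[W]` has no isolated vertices. -/
def NoIsolatedOn (G : SimpleGraph V) (W : Set V) : Prop :=
  ∀ v ∈ W, ∃ u ∈ W, G.Adj v u

/-- The induced subgraph `G[W]` is in the class `W₂`: it has no isolated
vertices, is well-covered, and removing any vertex leaves a well-covered graph
with the same independence number. -/
def W2On (G : SimpleGraph V) (W : Set V) : Prop :=
  NoIsolatedOn G W ∧ WellCoveredOn G W ∧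
    ∀ v ∈ W, WellCoveredOn G (W \ {v}) ∧ indepNumOn G (W \ {v}) = indepNumOn G W

/-- `G` is in the class `W₂`. -/
def W2 (G : SimpleGraph V) : Prop := W2On G Set.univ

/-- The closed neighborhood `N_G[S]` of a set of vertices `S`. -/
def nbhd (G : SimpleGraph V) (S : Set V) : Set V :=
  {v | v ∈ S ∨ ∃ u ∈ S, G.Adj u v}

/-- The vertex set of `G_S = G \ N_G[S]`. -/
def GDel (G : SimpleGraph V) (S : Set V) : Set V := Set.univ \ nbhd G S

/-- The induced subgraph `G[W]` is triangle-free. -/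
def TriangleFreeOn (G : SimpleGraph V) (W : Set V) : Prop :=
  ∀ x ∈ W, ∀ y ∈ W, ∀ z ∈ W, ¬ (G.Adj x y ∧ G.Adj y z ∧ G.Adj x z)

/-- `G` is locally triangle-free: `G_v` is triangle-free for every vertex `v`. -/
def LocallyTriangleFree (G : SimpleGraph V) : Prop :=
  ∀ v : V, TriangleFreeOn G (GDel G {v})

/-- `G` is a join of two proper (nonempty, disjoint) subgraphs. -/
def IsJoin (G : SimpleGraph V) : Prop :=
  ∃ V₁ V₂ : Set V, V₁.Nonempty ∧ V₂.Nonempty ∧ Disjoint V₁ V₂ ∧ V₁ ∪ V₂ = Set.univ ∧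
    ∀ x ∈ V₁, ∀ y ∈ V₂, G.Adj x y


section Aux

variable (G : SimpleGraph V)

lemma isIndepOn_empty (W : Set V) : IsIndepOn G W (↑(∅ : Finset V)) :=
  ⟨by simp, by simp⟩

lemma bddAbove_aux [Fintype V] (W : Set V) :
    BddAbove {n | ∃ S : Finset V, IsIndepOn G W ↑S ∧ S.card = n} := by
  refine ⟨Fintype.card V, ?_⟩
  rintro n ⟨S, -, rfl⟩
  exact S.card_le_univ

lemma card_le_indepNumOn [Fintype V] {W : Set V} {S : Finset V}
    (h : IsIndepOn G W ↑S) : S.card ≤ indepNumOn G W :=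
  le_csSup (bddAbove_aux G W) ⟨S, h, rfl⟩

lemma exists_maximal_ext [Fintype V] (W : Set V) (S : Finset V)
    (hS : IsIndepOn G W ↑S) : ∃ T : Finset V, S ⊆ T ∧ MaxIndepOn G W T := by
  classical
  let s : Finset (Finset V) := Finset.univ.filter fun T => S ⊆ T ∧ IsIndepOn G W ↑T
  have hmem : S ∈ s := by simp [s, hS]
  obtain ⟨T, hT, hTmax⟩ := s.exists_max_image Finset.card ⟨S, hmem⟩
  simp only [s, Finset.mem_filter, Finset.mem_univ, true_and] at hT
  refine ⟨T, hT.1, hT.2, ?_⟩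
  intro v hv hvT hins
  have h1 : insert v T ∈ s := by
    simp only [s, Finset.mem_filter, Finset.mem_univ, true_and]
    refine ⟨hT.1.trans (Finset.subset_insert _ _), ?_⟩
    rwa [Finset.coe_insert]
  have := hTmax _ h1
  rw [Finset.card_insert_of_notMem hvT] at this
  omega

lemma insert_pair_nonadj {G : SimpleGraph V} {T : Set V} {v : V}
    (hT : ∀ ⦃x⦄, x ∈ T → ∀ ⦃y⦄, y ∈ T → ¬ G.Adj x y)
    (hv : ∀ x ∈ T, ¬ G.Adj v x) :
    ∀ ⦃x⦄, x ∈ insert v T → ∀ ⦃y⦄, y ∈ insert v T → ¬ G.Adj x y := by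
  intro x hx y hy hxy
  rcases Set.mem_insert_iff.1 hx with h | hx'
  · subst h
    rcases Set.mem_insert_iff.1 hy with h' | hy'
    · subst h'; exact G.loopless.irrefl _ hxy
    · exact hv y hy' hxy
  · rcases Set.mem_insert_iff.1 hy with h' | hy'
    · subst h'; exact hv x hx' hxy.symm
    · exact hT hx' hy' hxy

end Aux

/-- For an edge `ab` of a locally triangle-free graph in `W₂`, the graph
`G_{ab}` is either empty or well-covered with `α(G_{ab}) = α(G) - 1`. -/
theorem stmt_6 [Fintype V] (G : SimpleGraph V) (h2 : W2 G)
    (hloc : LocallyTriangleFree G) {a b : V} (hab : G.Adj a b) :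
    GDel G {a, b} = ∅ ∨
      (WellCoveredOn G (GDel G {a, b}) ∧
        indepNumOn G (GDel G {a, b}) = indepNum G - 1) := by
  classical
  by_cases hne : GDel G {a, b} = ∅
  · exact Or.inl hne
  right
  obtain ⟨-, h2wc, h2del⟩ := h2
  have hmemDel : ∀ x : V, x ∈ GDel G {a, b} ↔ x ≠ a ∧ x ≠ b ∧ ¬G.Adj a x ∧ ¬G.Adj b x := by
    intro x
    constructor
    · intro hx
      have hn := hx.2
      exact ⟨fun h => hn (Or.inl (Or.inl h)), fun h => hn (Or.inl (Or.inr h)),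
        fun h => hn (Or.inr ⟨a, Or.inl rfl, h⟩), fun h => hn (Or.inr ⟨b, Or.inr rfl, h⟩)⟩
    · rintro ⟨h1, h2, h3, h4⟩
      refine ⟨trivial, ?_⟩
      rintro (⟨h | h⟩ | ⟨u, hu | hu, hadj⟩)
      · exact h1 h
      · exact h2 h
      · exact h3 (hu ▸ hadj)
      · exact h4 (hu ▸ hadj)
  have key : ∀ S : Finset V, MaxIndepOn G (GDel G {a, b}) S → S.card + 1 = indepNum G := by
    intro S hS
    obtain ⟨⟨hSsub, hSind⟩, hSmax⟩ := hS
    have hS' : ∀ s ∈ S, s ≠ a ∧ s ≠ b ∧ ¬G.Adj a s ∧ ¬G.Adj b s := by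
      intro s hs
      exact (hmemDel s).1 (hSsub (Finset.mem_coe.2 hs))
    obtain ⟨w, hw⟩ : S.Nonempty := by
      rcases S.eq_empty_or_nonempty with h | h
      · exfalso
        obtain ⟨v, hv⟩ := Set.nonempty_iff_ne_empty.2 hne
        subst h
        refine hSmax v hv (by simp) ⟨?_, ?_⟩
        · intro x hx
          rcases Set.mem_insert_iff.1 hx with h | hx'
          · subst h; exact hv
          · simp at hx'
        · exact insert_pair_nonadj (fun x hx => by simp at hx) (fun x hx => by simp at hx)
      · exact h
    have haS : a ∉ S := fun h => (hS' a h).1 rfl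
    have hSa_indep : IsIndepOn G (Set.univ \ {b}) ↑(insert a S) := by
      rw [Finset.coe_insert]
      constructor
      · intro x hx
        rcases Set.mem_insert_iff.1 hx with rfl | hx
        · exact ⟨trivial, by simp [hab.ne]⟩
        · exact ⟨trivial, by simp [(hS' x (Finset.mem_coe.1 hx)).2.1]⟩
      · exact insert_pair_nonadj hSind
          (fun x hx => (hS' x (Finset.mem_coe.1 hx)).2.2.1)
    have hSa_max : ∀ v ∈ Set.univ \ {b}, v ∉ (insert a S : Finset V) →
        ¬ IsIndepOn G (Set.univ \ {b}) (insert v ↑(insert a S)) := by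
      intro v hv hvmem hins
      rw [Finset.coe_insert] at hins
      have hvb : v ≠ b := by simpa using hv.2
      have hva : v ≠ a := fun h => hvmem (by simp [h])
      have hvS : v ∉ S := fun h => hvmem (Finset.mem_insert_of_mem h)
      have hnva : ¬ G.Adj v a :=
        hins.2 (Set.mem_insert _ _) (Set.mem_insert_of_mem _ (Set.mem_insert _ _))
      have hnvS : ∀ s ∈ S, ¬ G.Adj v s := fun s hs =>
        hins.2 (Set.mem_insert _ _)
          (Set.mem_insert_of_mem _ (Set.mem_insert_of_mem _ (Finset.mem_coe.2 hs)))
      have hbv : G.Adj b v := by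
        by_contra hbv
        have hvDel : v ∈ GDel G {a, b} := (hmemDel v).2 ⟨hva, hvb, fun h => hnva h.symm, hbv⟩
        refine hSmax v hvDel hvS ⟨?_, ?_⟩
        · intro x hx
          rcases Set.mem_insert_iff.1 hx with rfl | hx
          · exact hvDel
          · exact hSsub hx
        · exact insert_pair_nonadj hSind
            (fun x hx => hnvS x (Finset.mem_coe.1 hx))
      -- extend S ∪ {a, v} to a maximal independent set M of G
      have hT0 : IsIndepOn G Set.univ ↑(insert v (insert a S)) := by
        constructor
        · exact fun x _ => trivial
        · rw [Finset.coe_insert, Finset.coe_insert]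
          exact hins.2
      obtain ⟨M, hTM, hMfull⟩ := exists_maximal_ext G Set.univ _ hT0
      have hMcard : M.card = indepNum G := h2wc M hMfull
      have hvM : v ∈ M := hTM (Finset.mem_insert_self _ _)
      have haM : a ∈ M := hTM (by simp)
      have hSM : ∀ s ∈ S, s ∈ M := fun s hs => hTM (by simp [hs])
      have hM' : MaxIndepOn G (Set.univ \ {v}) (M.erase v) := by
        constructor
        · constructor
          · intro x hx
            have hx' : x ∈ M.erase v := Finset.mem_coe.1 hx
            exact ⟨trivial, by simpa using (Finset.mem_erase.1 hx').1⟩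
          · intro x hx y hy hxy
            exact hMfull.1.2 (Finset.mem_coe.2 (Finset.mem_of_mem_erase (Finset.mem_coe.1 hx)))
              (Finset.mem_coe.2 (Finset.mem_of_mem_erase (Finset.mem_coe.1 hy))) hxy
        · intro u hu huM' hins'
          have huv : u ≠ v := by simpa using hu.2
          have huM : u ∉ M := fun h => huM' (Finset.mem_erase.2 ⟨huv, h⟩)
          have hnu : ∀ x ∈ M.erase v, ¬ G.Adj u x := fun x hx =>
            hins'.2 (Set.mem_insert _ _) (Set.mem_insert_of_mem _ (Finset.mem_coe.2 hx))
          have hadjuv : G.Adj u v := by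
            have hni := hMfull.2 u trivial huM
            have hni' : ¬ ∀ x ∈ (insert u ↑M : Set V), ∀ y ∈ insert u (↑M : Set V),
                ¬ G.Adj x y := by
              intro h
              exact hni ⟨fun x _ => trivial, fun x hx y hy => h x hx y hy⟩
            push_neg at hni'
            obtain ⟨x, hx, y, hy, hxy⟩ := hni'
            rcases Set.mem_insert_iff.1 hx with hxu | hx'
            · subst hxu
              rcases Set.mem_insert_iff.1 hy with hyu | hy'
              · subst hyu; exact absurd hxy (G.loopless.irrefl _)
              · by_cases hyv : y = v
                · exact hyv ▸ hxy
                · exact absurd hxy (hnu y (Finset.mem_erase.2 ⟨hyv, Finset.mem_coe.1 hy'⟩))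
            · rcases Set.mem_insert_iff.1 hy with hyu | hy'
              · subst hyu
                by_cases hxv : x = v
                · exact hxv ▸ hxy.symm
                · exact absurd hxy.symm (hnu x (Finset.mem_erase.2 ⟨hxv, Finset.mem_coe.1 hx'⟩))
              · exact absurd hxy (hMfull.1.2 hx' hy')
          have haMe : a ∈ M.erase v := Finset.mem_erase.2 ⟨Ne.symm hva, haM⟩
          have hnua : ¬ G.Adj u a := hnu a haMe
          have hub : u ≠ b := fun h => hnua (h ▸ hab.symm)
          have hua : u ≠ a := fun h => huM (h ▸ haM)
          have hSMe : ∀ s ∈ S, s ∈ M.erase v := fun s hs =>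
            Finset.mem_erase.2 ⟨fun h => hvS (h ▸ hs), hSM s hs⟩
          have hnuS : ∀ s ∈ S, ¬ G.Adj u s := fun s hs => hnu s (hSMe s hs)
          have hbu : G.Adj b u := by
            by_contra hbu
            have huDel : u ∈ GDel G {a, b} := (hmemDel u).2 ⟨hua, hub, fun h => hnua h.symm, hbu⟩
            have huS : u ∉ S := fun h => huM (hSM u h)
            refine hSmax u huDel huS ⟨?_, ?_⟩
            · intro x hx
              rcases Set.mem_insert_iff.1 hx with rfl | hx
              · exact huDel
              · exact hSsub hx
            · exact insert_pair_nonadj hSind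
                (fun x hx => hnuS x (Finset.mem_coe.1 hx))
          -- triangle b, u, v in G_w, contradiction with local triangle-freeness
          have hwDel : ∀ x, x ≠ w → ¬ G.Adj w x → x ∈ GDel G {w} := by
            intro x h1 h2
            simp only [GDel, nbhd, Set.mem_diff, Set.mem_univ, true_and, Set.mem_setOf_eq,
              Set.mem_singleton_iff]
            push_neg
            exact ⟨h1, fun u hu => hu ▸ h2⟩
          have hbW : b ∈ GDel G {w} :=
            hwDel b (Ne.symm (hS' w hw).2.1) (fun h => (hS' w hw).2.2.2 h.symm)
          have huW : u ∈ GDel G {w} :=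
            hwDel u (fun h => huM (h ▸ hSM w hw)) (fun h => hnu w (hSMe w hw) h.symm)
          have hvW : v ∈ GDel G {w} :=
            hwDel v (fun h => hvS (h ▸ hw)) (fun h => hnvS w hw h.symm)
          exact hloc w b hbW u huW v hvW ⟨hbu, hadjuv, hbv⟩
      have hc := (h2del v trivial).1 (M.erase v) hM'
      rw [(h2del v trivial).2] at hc
      have hce : (M.erase v).card = M.card - 1 := Finset.card_erase_of_mem hvM
      have h1M : 1 ≤ M.card := Finset.card_pos.2 ⟨v, hvM⟩
      have hMcard' : M.card = indepNumOn G Set.univ := hMcard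
      rw [hMcard'] at hce h1M
      rw [hce] at hc
      omega
    have hSacard := (h2del b trivial).1 (insert a S) ⟨hSa_indep, hSa_max⟩
    rw [(h2del b trivial).2] at hSacard
    rw [Finset.card_insert_of_notMem haS] at hSacard
    exact hSacard
  obtain ⟨S0, -, hS0⟩ := exists_maximal_ext G (GDel G {a, b}) ∅ (isIndepOn_empty G _)
  have hS0card := key S0 hS0
  have hEq : indepNumOn G (GDel G {a, b}) = indepNum G - 1 := by
    apply le_antisymm
    · have hne0 : {n | ∃ S : Finset V, IsIndepOn G (GDel G {a, b}) ↑S ∧ S.card = n}.Nonempty :=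
        ⟨0, ∅, isIndepOn_empty G _, by simp⟩
      refine csSup_le hne0 ?_
      rintro n ⟨T, hT, rfl⟩
      have haT : a ∉ T := fun h => ((hmemDel a).1 (hT.1 (Finset.mem_coe.2 h))).1 rfl
      have hT' : ∀ t ∈ T, t ≠ a ∧ t ≠ b ∧ ¬G.Adj a t ∧ ¬G.Adj b t := fun t ht =>
        (hmemDel t).1 (hT.1 (Finset.mem_coe.2 ht))
      have hind : IsIndepOn G Set.univ ↑(insert a T) := by
        constructor
        · exact fun x _ => trivial
        · rw [Finset.coe_insert]
          exact insert_pair_nonadj hT.2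
            (fun x hx => (hT' x (Finset.mem_coe.1 hx)).2.2.1)
      have hle := card_le_indepNumOn G hind
      rw [Finset.card_insert_of_notMem haT] at hle
      have : indepNumOn G Set.univ = indepNum G := rfl
      omega
    · have hle := card_le_indepNumOn G hS0.1
      omega
  refine ⟨?_, hEq⟩
  intro S hS
  have hk := key S hS
  omega
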